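/- Let X be a Banach space, M and N closed subspaces of X, L a closed subspace contained in both M and N that is complemented in X, and P : X → X a bounded linear projection with range L. If K is a common complement of M and N in X, then L ⊕ K is a common complement of (I−P)(M) and (I−P)(N) in X. -/

import Mathlib

theorem stmt_3 {X : Type*} [NormedAddCommGroup X] [NormedSpace ℝ X] [CompleteSpace X]
    (M N L K : Submodule ℝ X)
    (hM : IsClosed (M : Set X)) (hN : IsClosed (N : Set X)) (hL : IsClosed (L : Set X))
    (hLM : L ≤ M) (hLN : L ≤ N)
    (P : X →L[ℝ] X) (hP : P ∘L P = P) (hPL : LinearMap.range (P : X →ₗ[ℝ] X) = L)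
    (hK : IsClosed (K : Set X))
    (h1 : M ⊓ K = ⊥) (h2 : M ⊔ K = ⊤) (h3 : N ⊓ K = ⊥) (h4 : N ⊔ K = ⊤) :
    IsClosed ((L ⊔ K : Submodule ℝ X) : Set X) ∧
      Submodule.map ((ContinuousLinearMap.id ℝ X - P : X →L[ℝ] X) : X →ₗ[ℝ] X) M ⊓ (L ⊔ K) = ⊥ ∧
      Submodule.map ((ContinuousLinearMap.id ℝ X - P : X →L[ℝ] X) : X →ₗ[ℝ] X) M ⊔ (L ⊔ K) = ⊤ ∧
      Submodule.map ((ContinuousLinearMap.id ℝ X - P : X →L[ℝ] X) : X →ₗ[ℝ] X) N ⊓ (L ⊔ K) = ⊥ ∧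
      Submodule.map ((ContinuousLinearMap.id ℝ X - P : X →L[ℝ] X) : X →ₗ[ℝ] X) N ⊔ (L ⊔ K) = ⊤ := by
  have hPP : ∀ x, P (P x) = P x := fun x => congrFun (congrArg (↑·) hP) x
  have hPmem : ∀ x, P x ∈ L := fun x => hPL ▸ LinearMap.mem_range_self (P : X →ₗ[ℝ] X) x
  have hPfix : ∀ x ∈ L, P x = x := by
    intro x hx
    rw [← hPL] at hx
    obtain ⟨y, rfl⟩ := hx
    exact hPP y
  -- the continuous projection onto K along M
  have hKM : IsCompl K M :=
    ⟨disjoint_iff.2 (by rw [inf_comm]; exact h1), codisjoint_iff.2 (by rw [sup_comm]; exact h2)⟩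
  set φ := K.linearProjOfClosedCompl M hKM hK hM with hφ
  set R : X →L[ℝ] X := K.subtypeL.comp φ with hR
  have hRmem : ∀ x, R x ∈ K := fun x => (φ x).2
  have hRK : ∀ x ∈ K, R x = x := by
    intro x hx
    have : φ x = ⟨x, hx⟩ := by
      rw [hφ]
      exact Submodule.linearProjOfIsCompl_apply_left hKM ⟨x, hx⟩
    simp [hR, this]
  have hRM : ∀ x ∈ M, R x = 0 := by
    intro x hx
    have : φ x = 0 := by
      rw [hφ]
      exact Submodule.linearProjOfIsCompl_apply_right hKM ⟨x, hx⟩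
    simp [hR, this]
  -- the continuous projection onto L ⊔ K
  set S : X →L[ℝ] X := P + (ContinuousLinearMap.id ℝ X - P).comp R with hS
  have hSapp : ∀ x, S x = P x + (R x - P (R x)) := by
    intro x
    simp [hS, ContinuousLinearMap.sub_apply, ContinuousLinearMap.add_apply,
      ContinuousLinearMap.comp_apply]
  have hSrange : ∀ x, S x ∈ L ⊔ K := by
    intro x
    rw [hSapp]
    have h1' : P x ∈ L ⊔ K := Submodule.mem_sup_left (hPmem x)
    have h2' : R x - P (R x) ∈ L ⊔ K := by
      have : R x - P (R x) = (R x - P (R x)) := rfl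
      exact sub_mem (Submodule.mem_sup_right (hRmem x)) (Submodule.mem_sup_left (hPmem (R x)))
    exact add_mem h1' h2'
  have hSfix : ∀ x ∈ L ⊔ K, S x = x := by
    intro x hx
    obtain ⟨l, hl, k, hk, rfl⟩ := Submodule.mem_sup.1 hx
    have hRl : R l = 0 := hRM l (hLM hl)
    have hRk : R k = k := hRK k hk
    have hPl : P l = l := hPfix l hl
    rw [hSapp]
    rw [map_add, map_add, hRl, hRk, zero_add, hPl]
    abel
  -- closedness of L ⊔ K
  have hsub : (L ⊔ K : Submodule ℝ X) = LinearMap.ker ((S - ContinuousLinearMap.id ℝ X : X →L[ℝ] X) : X →ₗ[ℝ] X) := by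
    ext x
    simp only [LinearMap.mem_ker, ContinuousLinearMap.coe_coe, ContinuousLinearMap.sub_apply,
      ContinuousLinearMap.id_apply, sub_eq_zero]
    constructor
    · exact hSfix x
    · intro hx
      rw [← hx]
      exact hSrange x
  have hclosed : IsClosed ((L ⊔ K : Submodule ℝ X) : Set X) := by
    rw [hsub]
    exact ContinuousLinearMap.isClosed_ker _
  -- the generic inf/sup facts
  have key : ∀ W : Submodule ℝ X, L ≤ W → W ⊓ K = ⊥ → W ⊔ K = ⊤ →
      Submodule.map ((ContinuousLinearMap.id ℝ X - P : X →L[ℝ] X) : X →ₗ[ℝ] X) W ⊓ (L ⊔ K) = ⊥ ∧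
      Submodule.map ((ContinuousLinearMap.id ℝ X - P : X →L[ℝ] X) : X →ₗ[ℝ] X) W ⊔ (L ⊔ K) = ⊤ := by
    intro W hLW hinf hsup
    constructor
    · rw [eq_bot_iff]
      rintro x ⟨hx1, hx2⟩
      obtain ⟨m, hm, rfl⟩ := hx1
      have hQm : ((ContinuousLinearMap.id ℝ X - P : X →L[ℝ] X) : X →ₗ[ℝ] X) m = m - P m := by
        simp [ContinuousLinearMap.sub_apply]
      rw [hQm] at hx2 ⊢
      obtain ⟨l, hl, k, hk, heq⟩ := Submodule.mem_sup.1 hx2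
      have hkW : k ∈ W := by
        have : k = (m - P m) - l := by rw [← heq]; abel
        rw [this]
        exact sub_mem (sub_mem hm (hLW (hPmem m))) (hLW hl)
      have hk0 : k = 0 := by
        have : k ∈ W ⊓ K := ⟨hkW, hk⟩
        rwa [hinf, Submodule.mem_bot] at this
      have hxl : m - P m = l := by rw [← heq, hk0, add_zero]
      have hPx : P (m - P m) = m - P m := by
        rw [hxl]; exact hPfix l hl
      have : P (m - P m) = 0 := by rw [map_sub, hPP, sub_self]
      rw [Submodule.mem_bot, ← hPx, this]
    · rw [eq_top_iff]
      intro x _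
      have hx : x ∈ W ⊔ K := by rw [hsup]; trivial
      obtain ⟨m, hm, k, hk, rfl⟩ := Submodule.mem_sup.1 hx
      refine Submodule.mem_sup.2 ⟨m - P m, ⟨m, hm, by simp [ContinuousLinearMap.sub_apply]⟩,
        P m + k, add_mem (Submodule.mem_sup_left (hPmem m)) (Submodule.mem_sup_right hk), ?_⟩
      abel
  obtain ⟨hM1, hM2⟩ := key M hLM h1 h2
  obtain ⟨hN1, hN2⟩ := key N hLN h3 h4
  exact ⟨hclosed, hM1, hM2, hN1, hN2⟩
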